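/- Let A ⊆ ℝ² be a connected open set. Then the convex hull of A equals the set of points lying on a line segment with both endpoints in A, i.e., Co(A) = {x : ∃ a, b ∈ A, x ∈ [a,b]}. -/

import Mathlib

open Complex Set Real

lemma seg_aux {p q x : ℂ} {r : ℝ} (hr : r < 0) (h : p - x = (r : ℂ) * (q - x)) :
    x ∈ segment ℝ p q := by
  have h1 : (0 : ℝ) < 1 - r := by linarith
  have h1' : (1 : ℂ) - (r : ℂ) ≠ 0 := by
    intro hc
    have := congrArg Complex.re hc
    simp at this
    linarith
  refine ⟨1 / (1 - r), -r / (1 - r), by positivity,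
    div_nonneg (by linarith) h1.le, ?_, ?_⟩
  · field_simp
    ring
  · rw [Complex.real_smul, Complex.real_smul]
    push_cast
    field_simp
    first
    | linear_combination -h
    | linear_combination (2 : ℂ) * h
    | linear_combination h
    | linear_combination (-2 : ℂ) * h

lemma key (A : Set ℂ) (hopen : IsOpen A) (hconn : IsConnected A) (x : ℂ)
    (hx : x ∈ convexHull ℝ A) : ∃ a ∈ A, ∃ b ∈ A, x ∈ segment ℝ a b := by
  by_cases hxA : x ∈ A
  · exact ⟨x, hxA, x, hxA, left_mem_segment ℝ x x⟩
  by_contra hcon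
  push_neg at hcon
  obtain ⟨p₀, hp₀⟩ := hconn.nonempty
  have hne : ∀ p ∈ A, p - x ≠ 0 := by
    intro p hp h
    rw [sub_eq_zero] at h
    exact hxA (h ▸ hp)
  set u : ℂ := (starRingEnd ℂ) (p₀ - x) with hu
  have hu0 : u ≠ 0 := by
    simp only [hu, ne_eq, map_eq_zero]
    exact hne p₀ hp₀
  set g : ℂ → ℂ := fun p => (p - x) * u with hg
  have hgne : ∀ p ∈ A, g p ≠ 0 := fun p hp => mul_ne_zero (hne p hp) hu0
  set h : ℂ → ℝ := fun p => (g p).arg with hh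
  -- antipodal exclusion
  have haux : ∀ p ∈ A, ∀ q ∈ A, h p ≠ h q + π := by
    intro p hp q hq heq
    have hd : Complex.arg (g p / g q) = π := by
      have h1 : (Complex.arg (g p / g q) : Real.Angle)
          = (Complex.arg (g p) : Real.Angle) - Complex.arg (g q) :=
        Complex.arg_div_coe_angle (hgne p hp) (hgne q hq)
      have h2 : (Complex.arg (g p) : Real.Angle)
          = (Complex.arg (g q) : Real.Angle) + (π : ℝ) := by
        rw [show Complex.arg (g p) = Complex.arg (g q) + π from heq]
        push_cast
        rfl
      rw [h2, add_sub_cancel_left] at h1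
      have := congrArg Real.Angle.toReal h1
      rwa [Complex.arg_coe_angle_toReal_eq_arg, Real.Angle.toReal_pi] at this
    rw [Complex.arg_eq_pi_iff] at hd
    obtain ⟨hre, him⟩ := hd
    set t : ℝ := (g p / g q).re with ht
    have hgpq : g p = (t : ℂ) * g q := by
      have hdiv : g p / g q = (t : ℂ) := by
        apply Complex.ext
        · simp [ht]
        · simp [him]
      calc g p = (g p / g q) * g q := (div_mul_cancel₀ _ (hgne q hq)).symm
        _ = (t : ℂ) * g q := by rw [hdiv]
    have hpx : p - x = (t : ℂ) * (q - x) := by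
      apply mul_right_cancel₀ hu0
      calc (p - x) * u = g p := rfl
        _ = (t : ℂ) * g q := hgpq
        _ = ((t : ℂ) * (q - x)) * u := by rw [hg]; ring
    exact hcon p hp q hq (seg_aux hre hpx)
  -- h p₀ = 0
  have hp₀0 : h p₀ = 0 := by
    have hgg : g p₀ = ((Complex.normSq (p₀ - x) : ℝ) : ℂ) := by
      rw [hg, hu]
      exact Complex.mul_conj _
    rw [hh]
    simp only [hgg]
    exact Complex.arg_ofReal_of_nonneg (Complex.normSq_nonneg _)
  have hpi : ∀ p ∈ A, h p ≠ π := by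
    intro p hp hpeq
    exact haux p hp p₀ hp₀ (by rw [hpeq, hp₀0, zero_add])
  have hlt : ∀ p ∈ A, h p < π := fun p hp => lt_of_le_of_ne (Complex.arg_le_pi _) (hpi p hp)
  have hgt : ∀ p ∈ A, -π < h p := fun p hp => Complex.neg_pi_lt_arg _
  -- continuity
  have hgc : Continuous g := by
    rw [hg]
    exact (continuous_id.sub continuous_const).mul continuous_const
  have hcont : ContinuousOn h A := by
    intro p hp
    apply ContinuousAt.continuousWithinAt
    apply (Complex.continuousAt_arg ?_).comp hgc.continuousAt
    rw [Complex.mem_slitPlane_iff_arg]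
    exact ⟨hpi p hp, hgne p hp⟩
  set I : Set ℝ := h '' A with hI
  have hIne : I.Nonempty := ⟨h p₀, p₀, hp₀, rfl⟩
  have hIconn : IsPreconnected I := hconn.isPreconnected.image h hcont
  have hIord : OrdConnected I := hIconn.ordConnected
  have hIbddA : BddAbove I := ⟨π, fun y ⟨p, hp, hy⟩ => hy ▸ (hlt p hp).le⟩
  have hIbddB : BddBelow I := ⟨-π, fun y ⟨p, hp, hy⟩ => hy ▸ (hgt p hp).le⟩
  -- the wiggle lemma
  have hwig : ∀ p ∈ A, (∃ q ∈ A, h p < h q) ∧ (∃ q ∈ A, h q < h p) := by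
    intro p hp
    set γ : ℝ → ℂ := fun s => p + s • ((p - x) * Complex.I) with hγ
    have hγc : Continuous γ := by
      rw [hγ]
      exact continuous_const.add (continuous_id.smul continuous_const)
    have hγ0 : γ 0 = p := by simp [hγ]
    have hmem : γ ⁻¹' A ∈ nhds (0 : ℝ) := by
      apply hγc.continuousAt.preimage_mem_nhds
      rw [hγ0]
      exact hopen.mem_nhds hp
    obtain ⟨δ, hδ, hball⟩ := Metric.mem_nhds_iff.mp hmem
    set w : ℝ → ℝ := fun s => Complex.arg (1 + s * Complex.I) with hw
    have hwc : ContinuousAt w 0 := by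
      apply (Complex.continuousAt_arg ?_).comp
        (continuous_const.add (Complex.continuous_ofReal.mul continuous_const)).continuousAt
      simp only [Pi.add_apply, Pi.mul_apply, Complex.ofReal_zero, zero_mul, add_zero]
      exact Complex.one_mem_slitPlane
    have hw0 : w 0 = 0 := by simp [hw, Complex.arg_one]
    set ε : ℝ := min (π - h p) (π + h p) with hε
    have hε0 : 0 < ε := lt_min (by linarith [hlt p hp]) (by linarith [hgt p hp])
    have hmem2 : {s : ℝ | |w s| < ε} ∈ nhds (0 : ℝ) := by
      have h2 := hwc.preimage_mem_nhds (Metric.ball_mem_nhds (w 0) hε0)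
      apply Filter.mem_of_superset h2
      intro s hs
      simp only [Set.mem_preimage, Metric.mem_ball, Real.dist_eq, hw0, sub_zero] at hs ⊢
      exact hs
    obtain ⟨δ₂, hδ₂, hball₂⟩ := Metric.mem_nhds_iff.mp hmem2
    set s₀ : ℝ := min δ δ₂ / 2 with hs₀
    have hs₀0 : 0 < s₀ := by positivity
    have hkey : ∀ s : ℝ, s ≠ 0 → |s| < min δ δ₂ → γ s ∈ A ∧ h (γ s) = h p + w s := by
      intro s hs0 hslt
      have hsA : γ s ∈ A := hball (by
        simp only [Metric.mem_ball, Real.dist_eq, sub_zero]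
        exact lt_of_lt_of_le hslt (min_le_left _ _))
      have hws : |w s| < ε := hball₂ (by
        simp only [Metric.mem_ball, Real.dist_eq, sub_zero]
        exact lt_of_lt_of_le hslt (min_le_right _ _))
      have h1s : (1 : ℂ) + s * Complex.I ≠ 0 := by
        intro hc
        have := congrArg Complex.re hc
        simp at this
      refine ⟨hsA, ?_⟩
      have hgγ : g (γ s) = g p * (1 + s * Complex.I) := by
        rw [hg, hγ]
        simp only [Complex.real_smul]
        ring
      have habs : |w s| < π - h p ∧ |w s| < π + h p := by
        constructor
        · exact lt_of_lt_of_le hws (min_le_left _ _)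
        · exact lt_of_lt_of_le hws (min_le_right _ _)
      have hrange : h p + w s ∈ Set.Ioc (-π) π := by
        rw [Set.mem_Ioc]
        constructor
        · linarith [(abs_lt.mp habs.2).1, hgt p hp]
        · linarith [(abs_lt.mp habs.1).2]
      rw [hh]
      simp only [hgγ]
      rw [Complex.arg_mul (hgne p hp) h1s hrange]
    have hwsgn : ∀ s : ℝ, (0 < s → 0 < w s) ∧ (s < 0 → w s < 0) := by
      intro s
      constructor
      · intro hs
        have hnn : 0 ≤ w s := Complex.arg_nonneg_iff.mpr (by simpa using hs.le)
        rcases hnn.lt_or_eq with h' | h'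
        · exact h'
        · exfalso
          have h2 := (Complex.arg_eq_zero_iff.mp h'.symm).2
          simp at h2
          linarith
      · intro hs
        exact Complex.arg_neg_iff.mpr (by simpa using hs)
    constructor
    · obtain ⟨hsA, hval⟩ := hkey s₀ hs₀0.ne' (by
        rw [abs_of_pos hs₀0, hs₀]
        linarith [lt_min hδ hδ₂])
      exact ⟨γ s₀, hsA, by rw [hval]; linarith [(hwsgn s₀).1 hs₀0]⟩
    · obtain ⟨hsA, hval⟩ := hkey (-s₀) (by linarith) (by
        rw [abs_of_neg (by linarith), hs₀]
        linarith [lt_min hδ hδ₂])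
      exact ⟨γ (-s₀), hsA, by rw [hval]; linarith [(hwsgn (-s₀)).2 (by linarith)]⟩
  -- sup and inf
  set m : ℝ := sInf I with hm
  set M : ℝ := sSup I with hM
  have hMm : M - m ≤ π := by
    by_contra hMmgt
    push_neg at hMmgt
    set ε' : ℝ := (M - m - π) / 2 with hε'
    have hε'0 : 0 < ε' := by simp only [hε']; linarith
    obtain ⟨a, haI, ha⟩ := exists_lt_of_lt_csSup hIne (show M - ε' < M by linarith)
    obtain ⟨b, hbI, hb⟩ := exists_lt_of_csInf_lt hIne (show m < m + ε' by linarith)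
    have hba : b + π ≤ a := by linarith
    have hbpI : b + π ∈ I := hIord.out hbI haI ⟨by linarith [Real.pi_pos], hba⟩
    obtain ⟨r, hrA, hr⟩ := hbpI
    obtain ⟨pb, hpbA, hpb⟩ := hbI
    exact haux r hrA pb hpbA (by rw [hr, hpb])
  have hmem' : ∀ p ∈ A, m ≤ h p ∧ h p ≤ M := fun p hp =>
    ⟨csInf_le hIbddB ⟨p, hp, rfl⟩, le_csSup hIbddA ⟨p, hp, rfl⟩⟩
  -- find c with h p ∈ (c, c + π) for all p ∈ A
  have hc : ∃ c : ℝ, ∀ p ∈ A, c < h p ∧ h p < c + π := by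
    rcases lt_or_eq_of_le hMm with hlt' | heq'
    · refine ⟨m - (π - (M - m)) / 2, fun p hp => ⟨?_, ?_⟩⟩
      · have := (hmem' p hp).1
        linarith
      · have := (hmem' p hp).2
        linarith
    · refine ⟨m, fun p hp => ⟨?_, ?_⟩⟩
      · rcases (hmem' p hp).1.lt_or_eq with h' | h'
        · exact h'
        · exfalso
          obtain ⟨q, hqA, hq⟩ := (hwig p hp).2
          have := (hmem' q hqA).1
          linarith
      · rcases (hmem' p hp).2.lt_or_eq with h' | h'
        · linarith
        · exfalso
          obtain ⟨q, hqA, hq⟩ := (hwig p hp).1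
          have := (hmem' q hqA).2
          linarith
  obtain ⟨c, hcA⟩ := hc
  -- half space contradiction
  set f : ℂ → ℝ := fun wv => -(wv * u * Complex.exp (-(↑(c + π / 2)) * Complex.I)).re with hf
  have hflin : IsLinearMap ℝ f := by
    constructor
    · intro a b
      simp only [hf, add_mul, Complex.add_re]
      ring
    · intro r a
      simp only [hf, Complex.real_smul, smul_eq_mul]
      rw [show (r : ℂ) * a * u * Complex.exp (-(↑(c + π / 2)) * Complex.I)
          = (r : ℂ) * (a * u * Complex.exp (-(↑(c + π / 2)) * Complex.I)) by ring]
      rw [Complex.re_ofReal_mul]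
      ring
  have hhalf : ∀ p ∈ A, f p < f x := by
    intro p hp
    have hdiff : f p - f x = -(g p * Complex.exp (-(↑(c + π / 2)) * Complex.I)).re := by
      simp only [hf, hg]
      rw [show (p - x) * u * Complex.exp (-(↑(c + π / 2)) * Complex.I)
          = p * u * Complex.exp (-(↑(c + π / 2)) * Complex.I)
            - x * u * Complex.exp (-(↑(c + π / 2)) * Complex.I) by ring]
      rw [Complex.sub_re]
      ring
    have hpos : 0 < (g p * Complex.exp (-(↑(c + π / 2)) * Complex.I)).re := by
      have habs0 : (0 : ℝ) < ‖g p‖ := by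
        rw [norm_pos_iff]
        exact hgne p hp
      rw [← Complex.norm_mul_exp_arg_mul_I (g p)]
      rw [mul_assoc, ← Complex.exp_add]
      rw [show ((g p).arg : ℂ) * Complex.I + -(↑(c + π / 2)) * Complex.I
          = ((((g p).arg - (c + π / 2) : ℝ)) : ℂ) * Complex.I by push_cast; ring]
      rw [Complex.re_ofReal_mul, Complex.exp_ofReal_mul_I_re]
      apply mul_pos habs0
      apply Real.cos_pos_of_mem_Ioo
      rw [Set.mem_Ioo]
      have h1 := (hcA p hp).1
      have h2 := (hcA p hp).2
      simp only [hh] at h1 h2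
      constructor
      · linarith
      · linarith
    have h3 : f p - f x < 0 := by
      rw [hdiff]
      linarith [hpos]
    linarith [h3]
  have hsub : convexHull ℝ A ⊆ {wv : ℂ | f wv < f x} :=
    convexHull_min (fun p hp => hhalf p hp) (convex_halfSpace_lt hflin (f x))
  exact lt_irrefl (f x) (hsub hx)

theorem stmt_5 (A : Set (EuclideanSpace ℝ (Fin 2)))
    (hopen : IsOpen A) (hconn : IsConnected A) :
    convexHull ℝ A = {x | ∃ a ∈ A, ∃ b ∈ A, x ∈ segment ℝ a b} := by
  set e : ℂ ≃ₗᵢ[ℝ] EuclideanSpace ℝ (Fin 2) := Complex.orthonormalBasisOneI.repr with he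
  ext x
  constructor
  · intro hx
    set A' : Set ℂ := ⇑e ⁻¹' A with hA'
    have himg : ⇑e.symm '' A = A' := by
      ext z
      constructor
      · rintro ⟨y, hy, rfl⟩
        simpa [hA'] using hy
      · intro hz
        exact ⟨e z, hz, by simp⟩
    have hopen' : IsOpen A' := hopen.preimage e.continuous
    have hconn' : IsConnected A' := by
      rw [← himg]
      exact hconn.image _ e.symm.continuous.continuousOn
    have hx' : e.symm x ∈ convexHull ℝ A' := by
      have hlin : IsLinearMap ℝ (⇑e.symm) := ⟨fun a b => map_add _ a b, fun c a => map_smul _ c a⟩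
      rw [← himg, ← hlin.image_convexHull]
      exact ⟨x, hx, rfl⟩
    obtain ⟨a, ha, b, hb, s, t, hs, ht, hst, heq⟩ := key A' hopen' hconn' (e.symm x) hx'
    refine ⟨e a, ha, e b, hb, s, t, hs, ht, hst, ?_⟩
    have h2 := congrArg e heq
    rw [map_add, map_smul, map_smul] at h2
    simpa using h2
  · rintro ⟨a, ha, b, hb, hseg⟩
    exact (convex_convexHull ℝ A).segment_subset (subset_convexHull ℝ A ha)
      (subset_convexHull ℝ A hb) hseg
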